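/- Let m = 2h + 1 ≥ 5 be odd. Then for every x ∈ 𝔽_{2^m}, Tr((x+1) + (x+1)^3 + (x+1)^{2^{(m+1)/2} + 1}) = Tr(x^{2^h + 1} + x^3 + x) + 1. -/

import Mathlib

section Aux

variable (m : ℕ)

local notation "K" => GaloisField 2 m

noncomputable def frobAlgEquiv : K ≃ₐ[ZMod 2] K :=
  AlgEquiv.ofRingEquiv (f := frobeniusEquiv K 2) (fun c => by
    rw [frobeniusEquiv_def]
    have hc : ∀ a : ZMod 2, a ^ 2 = a := by decide
    calc (algebraMap (ZMod 2) K c) ^ 2 = algebraMap (ZMod 2) K (c ^ 2) := by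
          rw [map_pow]
      _ = algebraMap (ZMod 2) K c := by rw [hc])

lemma trace_sq (y : K) :
    Algebra.trace (ZMod 2) K (y ^ 2) = Algebra.trace (ZMod 2) K y := by
  have := Algebra.trace_eq_of_algEquiv (frobAlgEquiv m) y
  simpa [frobAlgEquiv, AlgEquiv.ofRingEquiv, frobeniusEquiv_def, frobenius_def] using this

lemma trace_pow_pow (n : ℕ) (y : K) :
    Algebra.trace (ZMod 2) K (y ^ (2 ^ n)) = Algebra.trace (ZMod 2) K y := by
  induction n with
  | zero => simp
  | succ k ih =>
    have : y ^ (2 ^ (k + 1)) = (y ^ (2 ^ k)) ^ 2 := by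
      rw [← pow_mul, pow_succ]
    rw [this, trace_sq, ih]

end Aux

/-- Let m = 2h + 1 ≥ 5 be odd. Then for every x ∈ 𝔽_{2^m},
Tr((x+1) + (x+1)^3 + (x+1)^{2^{(m+1)/2}+1}) = Tr(x^{2^h+1} + x^3 + x) + 1. -/
theorem stmt4 (m h : ℕ) (hm : m = 2 * h + 1) (hm5 : 5 ≤ m) (x : GaloisField 2 m) :
    Algebra.trace (ZMod 2) (GaloisField 2 m)
        ((x + 1) + (x + 1) ^ 3 + (x + 1) ^ (2 ^ ((m + 1) / 2) + 1)) =
      Algebra.trace (ZMod 2) (GaloisField 2 m)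
          (x ^ (2 ^ h + 1) + x ^ 3 + x) + 1 := by
  let K := GaloisField 2 m
  let tr := Algebra.trace (ZMod 2) (GaloisField 2 m)
  show tr _ = tr _ + 1
  have hm0 : m ≠ 0 := by omega
  have hmd : (m + 1) / 2 = h + 1 := by omega
  have h2 : (2 : GaloisField 2 m) = 0 := by
    have := CharP.cast_eq_zero (GaloisField 2 m) 2
    exact_mod_cast this
  set q := 2 ^ (h + 1) with hq
  have hfrob : (x + 1) ^ q = x ^ q + 1 := by
    rw [hq]
    have := add_pow_char_pow (R := GaloisField 2 m) (p := 2) (n := h + 1)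
      (x := x) (y := 1)
    simpa using this
  have harg : (x + 1) + (x + 1) ^ 3 + (x + 1) ^ (2 ^ ((m + 1) / 2) + 1)
      = x ^ 3 + x ^ 2 + x + x ^ q * x + x ^ q + 1 := by
    rw [hmd, ← hq, pow_succ (x + 1) q, hfrob]
    linear_combination (x ^ 2 + 2 * x + 1) * h2
  letI : Fintype (GaloisField 2 m) := Fintype.ofFinite _
  have hcard : Fintype.card (GaloisField 2 m) = 2 ^ m := by
    have := GaloisField.card 2 m hm0
    rwa [Nat.card_eq_fintype_card] at this
  have hxm : x ^ (2 ^ m) = x := by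
    rw [← hcard]; exact FiniteField.pow_card x
  have hexp : (x ^ (2 ^ h + 1)) ^ (2 ^ (h + 1)) = x ^ q * x := by
    rw [← pow_mul]
    have he : (2 ^ h + 1) * 2 ^ (h + 1) = 2 ^ (h + 1) + 2 ^ m := by
      rw [hm]; ring
    rw [he, pow_add, hxm, hq]
  have htrq1 : tr (x ^ q * x) = tr (x ^ (2 ^ h + 1)) := by
    show Algebra.trace (ZMod 2) (GaloisField 2 m) _ = _
    rw [← hexp, trace_pow_pow]
  have htrq : tr (x ^ q) = tr x := by
    show Algebra.trace (ZMod 2) (GaloisField 2 m) _ = _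
    rw [hq, trace_pow_pow]
  have htrsq : tr (x ^ 2) = tr x := trace_sq m x
  have htr1 : tr (1 : GaloisField 2 m) = 1 := by
    have := Algebra.trace_algebraMap (S := GaloisField 2 m) (1 : ZMod 2)
    rw [map_one] at this
    show Algebra.trace (ZMod 2) (GaloisField 2 m) _ = _
    rw [this, GaloisField.finrank 2 hm0, hm, nsmul_eq_mul, mul_one]
    have h20 : (2 : ZMod 2) = 0 := by decide
    push_cast
    rw [h20]
    ring
  have h2t : ∀ a : ZMod 2, a + a = 0 := by decide
  rw [harg]
  rw [show (x ^ 3 + x ^ 2 + x + x ^ q * x + x ^ q + 1 : GaloisField 2 m)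
      = x ^ 3 + (x ^ 2 + (x + (x ^ q * x + (x ^ q + 1)))) by ring]
  rw [show (x ^ (2 ^ h + 1) + x ^ 3 + x : GaloisField 2 m)
      = x ^ (2 ^ h + 1) + (x ^ 3 + x) by ring]
  simp only [tr, map_add]
  rw [htrq1, htrq, htrsq, htr1]
  linear_combination h2t (Algebra.trace (ZMod 2) (GaloisField 2 m) x)
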